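/- arXiv:1907.08986 — 2 statements merged into one kernel-verified Lean document; each statement's English description precedes it below -/
import Mathlib

section
/- Let L be a finite-dimensional restricted Lie algebra over an algebraically closed field k of characteristic p, and suppose rad(L) := the set of p-nilpotent elements forms an ideal with L/rad(L) abelian. Then every simple restricted L-module is one-dimensional. -/
/-- let `L` be a finite-dimensional restricted Lie algebra (with
`p`-operation `pOp` compatible with `ad`) over an algebraically closed field of
characteristic `p`, and suppose the set of `p`-nilpotent elements forms a Lie
ideal `I` with `L/I` abelian (i.e. `[L,L] ⊆ I`).  Then every simple restricted
`L`-module is one-dimensional. -/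
theorem stmt3 {k : Type*} [Field k] [IsAlgClosed k] {p : ℕ} [Fact p.Prime] [CharP k p]
    {L : Type*} [LieRing L] [LieAlgebra k L] [Module.Finite k L]
    (pOp : L → L)
    (hres : ∀ x : L, LieAlgebra.ad k L (pOp x) = (LieAlgebra.ad k L x) ^ p)
    (I : LieIdeal k L)
    (hI : ∀ x : L, x ∈ I ↔ ∃ N : ℕ, pOp^[N] x = 0)
    (habelian : ∀ x y : L, ⁅x, y⁆ ∈ I)
    (M : Type*) [AddCommGroup M] [Module k M] [LieRingModule L M] [LieModule k L M]
    [Module.Finite k M]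
    (hrestM : ∀ x : L, LieModule.toEnd k L M (pOp x) = (LieModule.toEnd k L M x) ^ p)
    [LieModule.IsIrreducible k L M] :
    Module.finrank k M = 1 := by
  have hM : Nontrivial M := by
    by_contra h
    rw [not_nontrivial_iff_subsingleton] at h
    have : Subsingleton (LieSubmodule k L M) := (LieSubmodule.subsingleton_iff k L M).mpr h
    have h2 : Subsingleton (LieSubmodule k L M) := (LieSubmodule.subsingleton_iff k L M).mpr h
    exact not_subsingleton _ h2
  -- elements of `I` act nilpotently
  have key : ∀ (n : ℕ) (y : L),
      LieModule.toEnd k L M (pOp^[n] y) = (LieModule.toEnd k L M y) ^ (p ^ n) := by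
    intro n
    induction n with
    | zero => intro y; simp
    | succ n ih =>
      intro y
      rw [Function.iterate_succ', Function.comp_apply, hrestM, ih, ← pow_mul, pow_succ]
  have hnil : ∀ x : L, x ∈ I → IsNilpotent (LieModule.toEnd k L M x) := by
    intro x hx
    obtain ⟨N, hN⟩ := (hI x).1 hx
    exact ⟨p ^ N, by rw [← key N x, hN]; simp⟩
  -- the subspace annihilated by `I` is a nonzero Lie submodule, hence everything
  let N0 : LieSubmodule k L M :=
    { carrier := {m : M | ∀ x ∈ I, ⁅x, m⁆ = 0}
      add_mem' := fun {a b} ha hb x hx => by rw [lie_add, ha x hx, hb x hx, add_zero]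
      zero_mem' := fun x hx => lie_zero x
      smul_mem' := fun c m hm x hx => by rw [lie_smul, hm x hx, smul_zero]
      lie_mem := fun {y m} hm x hx => by
        rw [leibniz_lie, hm x hx, lie_zero, add_zero, hm _ (habelian x y)] }
  have hN0ne : N0 ≠ ⊥ := by
    -- Engel's theorem for the `I`-module `M`
    have hnilI : ∀ x : ↥I, IsNilpotent (LieModule.toEnd k I M x) := by
      intro x
      have h : LieModule.toEnd k I M x = LieModule.toEnd k L M (x : L) := by
        ext m; rfl
      rw [h]
      exact hnil _ x.2
    have : LieModule.IsNilpotent I M :=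
      LieAlgebra.isEngelian_of_isNoetherian M hnilI
    have := LieModule.nontrivial_max_triv_of_isNilpotent k I M
    obtain ⟨⟨m₁, hm₁⟩, ⟨m₂, hm₂⟩, hne⟩ := this
    have hmem : ∀ m : M, (∀ x : ↥I, ⁅x, m⁆ = 0) → m ∈ N0 := by
      intro m hm x hx
      have := hm ⟨x, hx⟩
      rwa [LieIdeal.coe_bracket_of_module] at this
    intro hbot
    apply hne
    have h1 : m₁ ∈ N0 := hmem m₁ fun x => (LieModule.mem_maxTrivSubmodule k I M m₁).1 hm₁ x
    have h2 : m₂ ∈ N0 := hmem m₂ fun x => (LieModule.mem_maxTrivSubmodule k I M m₂).1 hm₂ x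
    rw [hbot, LieSubmodule.mem_bot] at h1 h2
    simp [h1, h2]
  have hN0 : N0 = ⊤ := (IsSimpleOrder.eq_bot_or_eq_top N0).resolve_left hN0ne
  -- hence `I` (in particular all brackets) acts trivially
  have hIz : ∀ x ∈ I, ∀ m : M, ⁅x, m⁆ = 0 := by
    intro x hx m
    have hm : m ∈ N0 := hN0 ▸ LieSubmodule.mem_top m
    exact hm x hx
  -- each `x : L` acts by a scalar: its eigenspace is a Lie submodule
  have hscalar : ∀ x : L, ∃ μ : k, ∀ m : M, ⁅x, m⁆ = μ • m := by
    intro x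
    obtain ⟨μ, hμ⟩ := Module.End.exists_eigenvalue (LieModule.toEnd k L M x)
    refine ⟨μ, ?_⟩
    let E : LieSubmodule k L M :=
      { carrier := {m : M | ⁅x, m⁆ = μ • m}
        add_mem' := fun {a b} ha hb => by
          simp only [Set.mem_setOf_eq] at *; rw [lie_add, ha, hb, smul_add]
        zero_mem' := by simp
        smul_mem' := fun c m hm => by
          simp only [Set.mem_setOf_eq] at *; rw [lie_smul, hm, smul_comm]
        lie_mem := fun {y m} hm => by
          simp only [Set.mem_setOf_eq] at *
          rw [leibniz_lie, hIz _ (habelian x y) m, zero_add, hm, lie_smul] }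
    have hEne : E ≠ ⊥ := by
      obtain ⟨v, hv⟩ := hμ.exists_hasEigenvector
      intro hbot
      have hvE : v ∈ E := by
        show ⁅x, v⁆ = μ • v
        exact hv.apply_eq_smul
      rw [hbot, LieSubmodule.mem_bot] at hvE
      exact hv.2 hvE
    have hE : E = ⊤ := (IsSimpleOrder.eq_bot_or_eq_top E).resolve_left hEne
    intro m
    have hm : m ∈ E := hE ▸ LieSubmodule.mem_top m
    exact hm
  -- every subspace is a Lie submodule; a line is all of `M`
  obtain ⟨m, hm⟩ := exists_ne (0 : M)
  let S : LieSubmodule k L M :=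
    { carrier := (Submodule.span k {m} : Submodule k M)
      add_mem' := fun {a b} ha hb => Submodule.add_mem _ ha hb
      zero_mem' := Submodule.zero_mem _
      smul_mem' := fun c v hv => Submodule.smul_mem _ c hv
      lie_mem := fun {y v} hv => by
        obtain ⟨μ, hμ⟩ := hscalar y
        show ⁅y, v⁆ ∈ Submodule.span k {m}
        rw [hμ v]
        exact Submodule.smul_mem _ μ hv }
  have hSne : S ≠ ⊥ := by
    intro hbot
    have : m ∈ S := Submodule.mem_span_singleton_self m
    rw [hbot, LieSubmodule.mem_bot] at this
    exact hm this
  have hS : S = ⊤ := (IsSimpleOrder.eq_bot_or_eq_top S).resolve_left hSne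
  have : (Submodule.span k {m} : Submodule k M) = ⊤ := by
    have := congrArg (fun N : LieSubmodule k L M => (N : Submodule k M)) hS
    simp only [LieSubmodule.top_toSubmodule] at this
    exact this
  rw [← finrank_top k M, ← this]
  exact finrank_span_singleton hm
end

section
/- Let H be a finite-dimensional torus in a restricted Lie algebra over an algebraically closed field k of characteristic p, i.e. H is abelian with h^{[p]} in the span of {h^{[p]^j}} and [p] injective on H. Then the set Λ of restricted weights {λ ∈ H* : λ(h^{[p]}) = λ(h)^p for all h ∈ H} has exactly p^{dim H} elements. -/
open Polynomial Finset Module Submodule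
set_option linter.unusedSectionVars false

section StmtAux

variable {k : Type*} [Field k] [IsAlgClosed k] {p : ℕ} [Fact p.Prime] [CharP k p]

lemma stmt4_exists_root_of_coeff {g : k[X]} {N : ℕ} (hc : g.coeff N ≠ 0) (hN : N ≠ 0) :
    ∃ z : k, g.eval z = 0 := by
  have h1 : N ≤ g.natDegree := le_natDegree_of_ne_zero hc
  have h2 : g.degree ≠ 0 := by
    have h3 : 0 < g.natDegree := lt_of_lt_of_le (Nat.pos_of_ne_zero hN) h1
    exact ne_of_gt (natDegree_pos_iff_degree_pos.mp h3)
  obtain ⟨z, hz⟩ := IsAlgClosed.exists_root g h2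
  exact ⟨z, hz⟩

lemma stmt4_AS (c : k) : ∃ d : k, d ^ p = d - c := by
  have hp1 : p ≠ 1 := (Fact.out : p.Prime).ne_one
  have hp0 : p ≠ 0 := (Fact.out : p.Prime).ne_zero
  obtain ⟨z, hz⟩ := stmt4_exists_root_of_coeff (g := X ^ p - X + C c) (N := p) (by
    simp [coeff_X, coeff_C, hp0, Ne.symm hp1]) hp0
  refine ⟨z, ?_⟩
  simp only [eval_add, eval_sub, eval_pow, eval_X, eval_C] at hz
  linear_combination hz

variable {V : Type*} [AddCommGroup V] [Module k V]

lemma stmt4_phi_sum (φ : V →ₛₗ[frobenius k p] V) (u : V) (s : Finset ℕ) (e : ℕ → k) (idx : ℕ → ℕ) :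
    φ (∑ i ∈ s, e i • (⇑φ)^[idx i] u) = ∑ i ∈ s, (e i) ^ p • (⇑φ)^[idx i + 1] u := by
  rw [map_sum]
  refine Finset.sum_congr rfl fun i _ => ?_
  rw [map_smulₛₗ, frobenius_def, Function.iterate_succ_apply']

lemma stmt4_phi_iter_zero (φ : V →ₛₗ[frobenius k p] V) (j : ℕ) : (⇑φ)^[j] (0 : V) = 0 := by
  induction j with
  | zero => rfl
  | succ j ih => rw [Function.iterate_succ_apply', ih, map_zero]

lemma stmt4_phi_iter_sum (φ : V →ₛₗ[frobenius k p] V) (u : V) (j : ℕ) (s : Finset ℕ)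
    (e : ℕ → k) (idx : ℕ → ℕ) :
    (⇑φ)^[j] (∑ i ∈ s, e i • (⇑φ)^[idx i] u) = ∑ i ∈ s, (e i) ^ (p ^ j) • (⇑φ)^[idx i + j] u := by
  induction j with
  | zero => simp
  | succ j ih =>
    rw [Function.iterate_succ_apply', ih, stmt4_phi_sum]
    refine Finset.sum_congr rfl fun i _ => ?_
    rw [← pow_mul, ← pow_succ]
    ring_nf

end StmtAux

section Fixed

variable {k : Type*} [Field k] [IsAlgClosed k] {p : ℕ} [Fact p.Prime] [CharP k p]
variable {V : Type*} [AddCommGroup V] [Module k V] [Module.Finite k V]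

lemma stmt4_exists_fixed (φ : V →ₛₗ[frobenius k p] V) (hinj : Function.Injective φ)
    (hnt : Nontrivial V) : ∃ v : V, v ≠ 0 ∧ φ v = v := by
  classical
  have hp1 : 1 < p := (Fact.out : p.Prime).one_lt
  have hp0 : 0 < p := (Fact.out : p.Prime).pos
  obtain ⟨u, hu⟩ := exists_ne (0 : V)
  set w : ℕ → V := fun i => (⇑φ)^[i] u with hw
  set P : ℕ → Prop := fun m => ∃ c : ℕ → k, c 0 ≠ 0 ∧ c m ≠ 0 ∧
    ∑ i ∈ Finset.range (m + 1), c i • w i = 0 with hP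
  -- the key reduction lemma
  have key : ∀ (M : ℕ) (c : ℕ → k), (∑ i ∈ Finset.range M, c i • w i = 0) →
      (∃ j, j < M ∧ c j ≠ 0) → ∃ m, m < M ∧ P m := by
    intro M c hsum ⟨j0, hj0M, hj0⟩
    set s : Finset ℕ := (Finset.range M).filter (fun i => c i ≠ 0) with hs
    have hsne : s.Nonempty := ⟨j0, by simp [hs, hj0M, hj0]⟩
    set jmin := s.min' hsne with hjmin
    set jmax := s.max' hsne with hjmax
    have hmm : jmin ≤ jmax := s.min'_le _ (s.max'_mem hsne)
    have hjmaxM : jmax < M := Finset.mem_range.mp (Finset.mem_filter.mp (s.max'_mem hsne)).1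
    have hcmin : c jmin ≠ 0 := (Finset.mem_filter.mp (s.min'_mem hsne)).2
    have hcmax : c jmax ≠ 0 := (Finset.mem_filter.mp (s.max'_mem hsne)).2
    have hmem_s : ∀ i, i < M → c i ≠ 0 → i ∈ s := fun i h1 h2 => by simp [hs, h1, h2]
    -- the sum really starts at jmin
    have h1 : ∑ i ∈ Finset.Ico jmin M, c i • w i = 0 := by
      rw [← hsum]
      refine Finset.sum_subset ?_ ?_
      · intro x hx
        exact Finset.mem_range.mpr (Finset.mem_Ico.mp hx).2
      · intro x hx hx2
        have hxM := Finset.mem_range.mp hx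
        simp only [Finset.mem_Ico, not_and, not_lt] at hx2
        have hxlt : x < jmin := by
          by_contra hh
          push_neg at hh
          have := hx2 hh
          omega
        by_cases hcx : c x = 0
        · rw [hcx, zero_smul]
        · exact absurd (s.min'_le x (hmem_s x (Finset.mem_range.mp hx) hcx)) (not_le.mpr hxlt)
    have h2 : ∑ i ∈ Finset.range (M - jmin), c (jmin + i) • w (jmin + i) = 0 := by
      rw [Finset.sum_Ico_eq_sum_range] at h1; exact h1
    -- take p^jmin-th roots
    choose d hd using fun i : ℕ => IsAlgClosed.exists_pow_nat_eq (c (jmin + i)) (pow_pos hp0 jmin)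
    have h3 : ∑ i ∈ Finset.range (M - jmin), d i • w i = 0 := by
      have h4 := stmt4_phi_iter_sum φ u jmin (Finset.range (M - jmin)) d id
      simp only [id_eq] at h4
      have h5 : ∑ i ∈ Finset.range (M - jmin), d i ^ p ^ jmin • (⇑φ)^[i + jmin] u = 0 := by
        rw [← h2]
        refine Finset.sum_congr rfl fun i _ => ?_
        rw [hd i, Nat.add_comm i jmin]
      rw [h5] at h4
      exact hinj.iterate jmin (h4.trans (stmt4_phi_iter_zero φ jmin).symm)
    refine ⟨jmax - jmin, by omega, d, ?_, ?_, ?_⟩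
    · intro h0
      apply hcmin
      have h5 := hd 0
      rw [h0, zero_pow (pow_pos hp0 jmin).ne'] at h5
      simpa using h5.symm
    · intro h0
      apply hcmax
      have : c (jmin + (jmax - jmin)) = 0 := by rw [← hd, h0, zero_pow (pow_pos hp0 jmin).ne']
      rwa [Nat.add_sub_cancel' hmm] at this
    · rw [← h3]
      refine Finset.sum_subset ?_ ?_
      · exact Finset.range_subset_range.mpr (by omega)
      · intro x hx hx2
        have hx3 : jmax - jmin + 1 ≤ x := by
          by_contra h; exact hx2 (Finset.mem_range.mpr (by omega))
        have hx4 : x < M - jmin := Finset.mem_range.mp hx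
        have hcx : c (jmin + x) = 0 := by
          by_contra hcc
          have := s.le_max' _ (hmem_s _ (by omega) hcc)
          omega
        have : d x = 0 := by
          have := hd x
          rw [hcx] at this
          exact pow_eq_zero_iff (pow_pos hp0 jmin).ne' |>.mp this
        rw [this, zero_smul]
  have hwi : ∀ i, (⇑φ)^[i] u = w i := fun _ => rfl
  -- existence of some m with P m
  have hPex : ∃ m, P m := by
    have hnli : ¬ LinearIndependent k (fun i : Fin (finrank k V + 1) => w i) := by
      intro hli
      have h11 := LinearIndependent.fintype_card_le_finrank hli
      simp only [Fintype.card_fin] at h11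
      omega
    obtain ⟨g, hgsum, i0, hgi0⟩ := Fintype.not_linearIndependent_iff.mp hnli
    set c : ℕ → k := fun i => if h : i < finrank k V + 1 then g ⟨i, h⟩ else 0 with hc
    have hcsum : ∑ i ∈ Finset.range (finrank k V + 1), c i • w i = 0 := by
      rw [Finset.sum_range (fun i => c i • w i), ← hgsum]
      refine Finset.sum_congr rfl fun i _ => ?_
      simp [hc, i.isLt, Nat.lt_succ_iff.mp i.isLt]
    obtain ⟨m, _, hm⟩ := key (finrank k V + 1) c hcsum
      ⟨i0, i0.isLt, by simpa [hc, i0.isLt, Nat.lt_succ_iff.mp i0.isLt] using hgi0⟩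
    exact ⟨m, hm⟩
  let m0 := Nat.find hPex
  have hm0P : P m0 := Nat.find_spec hPex
  have hm0min : ∀ m', m' < m0 → ¬ P m' := fun m' h => Nat.find_min hPex h
  obtain ⟨c, hc0, hcm, hcsum⟩ := hm0P
  have hm0pos : 0 < m0 := by
    by_contra hh
    have h0 : m0 = 0 := by omega
    rw [h0, Finset.sum_range_one] at hcsum
    rcases smul_eq_zero.mp hcsum with h | h
    · exact hc0 h
    · exact hu h
  -- normalize the relation
  set a : ℕ → k := fun i => -(c i) / c m0 with ha
  have ha0 : a 0 ≠ 0 := div_ne_zero (neg_ne_zero.mpr hc0) hcm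
  rw [Finset.sum_range_succ] at hcsum
  have hwm0 : w m0 = ∑ i ∈ Finset.range m0, a i • w i := by
    have h7 : c m0 • (∑ i ∈ Finset.range m0, a i • w i)
        = ∑ i ∈ Finset.range m0, (-(c i)) • w i := by
      rw [Finset.smul_sum]
      refine Finset.sum_congr rfl fun i _ => ?_
      rw [smul_smul]
      congr 1
      rw [ha]
      field_simp
    have h8 : c m0 • w m0 = ∑ i ∈ Finset.range m0, (-(c i)) • w i := by
      have h9 : c m0 • w m0 = -(∑ i ∈ Finset.range m0, c i • w i) :=
        eq_neg_of_add_eq_zero_right hcsum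
      rw [h9]
      simp [neg_smul]
    exact smul_right_injective V hcm (h8.trans h7.symm)
  -- the auxiliary polynomial and its root
  set ψ : k[X] :=
    (∑ j ∈ Finset.range m0, C (a j ^ p ^ (m0 - 1 - j)) * X ^ (p ^ (m0 - j) - 1)) - 1 with hψ
  have hpm0 : 1 < p ^ m0 := Nat.one_lt_pow hm0pos.ne' hp1
  have hcoeff : ψ.coeff (p ^ m0 - 1) = a 0 ^ p ^ (m0 - 1) := by
    rw [hψ, coeff_sub, finset_sum_coeff]
    have hone : (1 : k[X]).coeff (p ^ m0 - 1) = 0 := by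
      rw [coeff_one, if_neg (by omega)]
    rw [hone, sub_zero]
    have hother : ∀ j ∈ Finset.range m0, j ≠ 0 →
        (C (a j ^ p ^ (m0 - 1 - j)) * X ^ (p ^ (m0 - j) - 1)).coeff (p ^ m0 - 1) = 0 := by
      intro j hj hj0
      have h9 : p ^ (m0 - j) < p ^ m0 :=
        Nat.pow_lt_pow_right hp1 (by have := Finset.mem_range.mp hj; omega)
      have h10 : 1 ≤ p ^ (m0 - j) := Nat.one_le_pow _ _ (by omega)
      rw [coeff_C_mul, coeff_X_pow, if_neg (by omega), mul_zero]
    rw [Finset.sum_eq_single_of_mem 0 (Finset.mem_range.mpr hm0pos) hother]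
    rw [coeff_C_mul, coeff_X_pow]
    simp
  obtain ⟨z, hz⟩ := stmt4_exists_root_of_coeff
    (hcoeff ▸ pow_ne_zero (p ^ (m0 - 1)) ha0) (by omega)
  have hexpa : ∀ j ∈ Finset.range m0, 1 ≤ p ^ (m0 - j) ∧ p ^ (m0 - j) - 1 ≠ 0 := by
    intro j hj
    have hjm := Finset.mem_range.mp hj
    have h9 : p ≤ p ^ (m0 - j) := by
      calc p = p ^ 1 := (pow_one p).symm
      _ ≤ p ^ (m0 - j) := Nat.pow_le_pow_right (by omega) (by omega)
    omega
  have hz0 : z ≠ 0 := by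
    intro h0
    rw [h0, hψ] at hz
    simp only [eval_sub, eval_one, eval_finset_sum, eval_mul, eval_C, eval_pow, eval_X] at hz
    rw [Finset.sum_eq_zero (fun j hj => by
      rw [zero_pow (hexpa j hj).2, mul_zero])] at hz
    simp at hz
  have heval : ∑ j ∈ Finset.range m0, a j ^ p ^ (m0 - 1 - j) * z ^ (p ^ (m0 - j) - 1) = 1 := by
    rw [hψ] at hz
    simp only [eval_sub, eval_one, eval_finset_sum, eval_mul, eval_C, eval_pow, eval_X] at hz
    linear_combination hz
  have heq : ∑ j ∈ Finset.range m0, a j ^ p ^ (m0 - 1 - j) * z ^ (p ^ (m0 - j)) = z := by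
    have h12 := congrArg (· * z) heval
    simp only [Finset.sum_mul, one_mul] at h12
    rw [← h12]
    refine Finset.sum_congr rfl fun j hj => ?_
    rw [mul_assoc, ← pow_succ]
    congr 2
    have := (hexpa j hj).1
    omega
  -- the coefficients of the fixed vector
  set b : ℕ → k := fun i => ∑ j ∈ Finset.range (i + 1), a j ^ (p ^ (i - j)) * z ^ (p ^ (i - j + 1))
    with hb
  have hbM : b (m0 - 1) = z := by
    have hm : m0 - 1 + 1 = m0 := by omega
    calc b (m0 - 1) = ∑ j ∈ Finset.range m0, a j ^ p ^ (m0 - 1 - j) * z ^ (p ^ (m0 - j)) := by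
          simp only [hb, hm]
          refine Finset.sum_congr rfl fun j hj => ?_
          have hjm := Finset.mem_range.mp hj
          have e2 : m0 - 1 - j + 1 = m0 - j := by omega
          rw [e2]
    _ = z := heq
  have hb0 : b 0 = a 0 * z ^ p := by
    simp [hb]
  have hbrec : ∀ i, b (i + 1) = (b i) ^ p + z ^ p * a (i + 1) := by
    intro i
    conv_lhs => simp only [hb]
    rw [Finset.sum_range_succ]
    have hlast : a (i+1) ^ p ^ (i + 1 - (i+1)) * z ^ p ^ (i + 1 - (i+1) + 1) = z ^ p * a (i+1) := by
      simp [Nat.sub_self]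
      ring
    rw [hlast]
    congr 1
    have hfr : (b i) ^ p = ∑ j ∈ Finset.range (i + 1),
        (a j ^ (p ^ (i - j)) * z ^ (p ^ (i - j + 1))) ^ p := by
      calc (b i) ^ p = frobenius k p (b i) := rfl
      _ = _ := by simp only [hb]; exact map_sum (frobenius k p) _ _
    rw [hfr]
    refine Finset.sum_congr rfl fun j hj => ?_
    have hjm := Finset.mem_range.mp hj
    have e1 : i + 1 - j = i - j + 1 := by omega
    rw [e1, mul_pow, ← pow_mul, ← pow_mul, ← pow_succ, ← pow_succ]
  set v : V := ∑ i ∈ Finset.range m0, b i • w i with hv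
  have hφv : φ v = v := by
    have h10 := stmt4_phi_sum φ u (Finset.range m0) b id
    simp only [id_eq, hwi] at h10
    rw [hv, h10]
    obtain ⟨M, hM⟩ : ∃ M, m0 = M + 1 := ⟨m0 - 1, by omega⟩
    have hbMz : b M = z := by rw [← hbM]; congr 1; omega
    have hwM : w (M + 1) = ∑ j ∈ Finset.range (M + 1), a j • w j := by
      rw [← hM]; exact hwm0
    rw [hM]
    rw [Finset.sum_range_succ (fun i => (b i) ^ p • w (i + 1)) M]
    rw [Finset.sum_range_succ' (fun i => b i • w i) M]
    rw [hwM, hbMz, Finset.smul_sum]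
    simp only [smul_smul]
    rw [Finset.sum_range_succ' (fun j => (z ^ p * a j) • w j) M]
    rw [← add_assoc, ← Finset.sum_add_distrib]
    congr 1
    · refine Finset.sum_congr rfl fun i _ => ?_
      rw [← add_smul, ← hbrec i]
    · rw [hb0]
      congr 1
      ring
  have hvne : v ≠ 0 := by
    intro h0
    rw [hv] at h0
    obtain ⟨m', hm'lt, hm'P⟩ := key m0 b h0 ⟨m0 - 1, by omega, by rw [hbM]; exact hz0⟩
    exact hm0min m' hm'lt hm'P
  exact ⟨v, hvne, hφv⟩

end Fixed


section Span

variable {k : Type*} [Field k] [IsAlgClosed k] {p : ℕ} [Fact p.Prime] [CharP k p]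

lemma stmt4_span_fixed (n : ℕ) : ∀ (V : Type v) [AddCommGroup V] [Module k V]
    [Module.Finite k V] (φ : V →ₛₗ[frobenius k p] V), Function.Injective φ →
    Module.finrank k V = n → Submodule.span k {x : V | φ x = x} = ⊤ := by
  have hp0 : 0 < p := (Fact.out : p.Prime).pos
  induction n with
  | zero =>
    intro V _ _ _ φ _ hrank
    have : Subsingleton V := Module.finrank_zero_iff.mp hrank
    exact Subsingleton.elim _ _
  | succ n ih =>
    intro V _ _ _ φ hinj hrank
    have hnt : Nontrivial V := Module.nontrivial_of_finrank_pos
      (show 0 < Module.finrank k V by omega)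
    obtain ⟨v, hv0, hvfix⟩ := stmt4_exists_fixed φ hinj hnt
    set N : Submodule k V := Submodule.span k {v} with hN
    have hvN : v ∈ N := Submodule.mem_span_singleton_self v
    have hφN : N ≤ N.comap φ := by
      intro x hx
      obtain ⟨cc, rfl⟩ := Submodule.mem_span_singleton.mp hx
      rw [Submodule.mem_comap, map_smulₛₗ, frobenius_def, hvfix]
      exact N.smul_mem _ hvN
    set φbar := N.mapQ N φ hφN with hφbar
    have hbar_mk : ∀ x : V, φbar (N.mkQ x) = N.mkQ (φ x) := fun x => rfl
    have hbarinj : Function.Injective φbar := by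
      rw [injective_iff_map_eq_zero]
      intro x hx
      obtain ⟨y, rfl⟩ := N.mkQ_surjective x
      rw [hbar_mk] at hx
      have h1 : φ y ∈ N := (Submodule.Quotient.mk_eq_zero N).mp hx
      obtain ⟨cc, hcc⟩ := Submodule.mem_span_singleton.mp h1
      obtain ⟨d, hd⟩ := IsAlgClosed.exists_pow_nat_eq cc hp0
      have h2 : φ (d • v) = φ y := by
        rw [map_smulₛₗ, frobenius_def, hvfix, hd, hcc]
      have h3 : y = d • v := (hinj h2).symm
      rw [show N.mkQ y = Submodule.Quotient.mk y from rfl, Submodule.Quotient.mk_eq_zero]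
      rw [h3]
      exact N.smul_mem _ hvN
    have hrkN : Module.finrank k N = 1 := finrank_span_singleton hv0
    have hrkQ : Module.finrank k (V ⧸ N) = n := by
      have h4 := Submodule.finrank_quotient_add_finrank N
      omega
    have hspanQ := ih (V ⧸ N) φbar hbarinj hrkQ
    set U : Submodule k V := Submodule.span k {x : V | φ x = x} with hU
    have hNU : N ≤ U := by
      rw [hN, Submodule.span_le, Set.singleton_subset_iff]
      exact Submodule.subset_span hvfix
    have hmap : Submodule.map N.mkQ U = ⊤ := by
      rw [← top_le_iff, ← hspanQ, Submodule.span_le]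
      intro xb hxb
      obtain ⟨x, rfl⟩ := N.mkQ_surjective xb
      have hfx : φbar (N.mkQ x) = N.mkQ x := hxb
      have h5 : φ x - x ∈ N := by
        rw [← Submodule.Quotient.mk_eq_zero N]
        show N.mkQ (φ x - x) = 0
        rw [map_sub, ← hbar_mk, hfx, sub_self]
      obtain ⟨cc, hcc⟩ := Submodule.mem_span_singleton.mp h5
      obtain ⟨d, hd⟩ := stmt4_AS (p := p) cc
      have h6 : φ x = x + cc • v := by rw [hcc]; abel
      refine Submodule.mem_map.mpr ⟨x + d • v, ?_, ?_⟩
      · apply Submodule.subset_span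
        show φ (x + d • v) = x + d • v
        rw [map_add, map_smulₛₗ, frobenius_def, hvfix, hd, h6, sub_smul]
        abel
      · rw [map_add]
        have h7 : N.mkQ (d • v) = 0 := by
          rw [show N.mkQ (d • v) = Submodule.Quotient.mk (d • v) from rfl,
            Submodule.Quotient.mk_eq_zero]
          exact N.smul_mem _ hvN
        rw [h7, add_zero]
    have h8 : Submodule.comap N.mkQ (Submodule.map N.mkQ U) = U := by
      rw [Submodule.comap_map_mkQ, sup_eq_right.mpr hNU]
    rw [hmap] at h8
    rw [← h8, Submodule.comap_top]

end Span

section Count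

variable {k : Type*} [Field k] [IsAlgClosed k] {p : ℕ} [Fact p.Prime] [CharP k p]

lemma stmt4_card_fixedfield : Nat.card {x : k // x ^ p = x} = p := by
  classical
  have hp1 : 1 < p := (Fact.out : p.Prime).one_lt
  set ρ : ZMod p →+* k := ZMod.castHom dvd_rfl k with hρ
  have hρinj : Function.Injective ρ := ρ.injective
  set e : ZMod p → {x : k // x ^ p = x} := fun x => ⟨ρ x, by rw [← map_pow, ZMod.pow_card]⟩
    with he
  have heinj : Function.Injective e := fun x y hxy => hρinj (congrArg Subtype.val hxy)
  have hesurj : Function.Surjective e := by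
    rintro ⟨y, hy⟩
    by_contra hcon
    push_neg at hcon
    set f : k[X] := X ^ p - X with hf
    have hfcoeff : f.coeff p = 1 := by
      rw [hf, coeff_sub, coeff_X_pow, if_pos rfl, coeff_X, if_neg (by omega), sub_zero]
    have hfne : f ≠ 0 := fun h => by simp [h] at hfcoeff
    have hfdeg : f.natDegree ≤ p := by
      calc f.natDegree ≤ max (X ^ p : k[X]).natDegree (X : k[X]).natDegree :=
            natDegree_sub_le _ _
      _ ≤ p := by
          rw [natDegree_X_pow, natDegree_X]
          omega
    set T : Finset k := Finset.univ.image (fun x : ZMod p => ρ x) with hT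
    have hTcard : T.card = p := by
      rw [hT, Finset.card_image_of_injective _ hρinj, Finset.card_univ, ZMod.card]
    have hyT : y ∉ T := by
      intro hmem
      obtain ⟨x, _, hx⟩ := Finset.mem_image.mp hmem
      exact hcon x (Subtype.ext hx)
    have hsub : insert y T ⊆ f.roots.toFinset := by
      intro x hx
      rw [Multiset.mem_toFinset, mem_roots hfne]
      rcases Finset.mem_insert.mp hx with h | h
      · subst h
        show f.IsRoot x
        rw [hf]
        simp only [IsRoot, eval_sub, eval_pow, eval_X]
        rw [hy, sub_self]
      · obtain ⟨z, _, hz⟩ := Finset.mem_image.mp h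
        show f.IsRoot x
        rw [hf]
        simp only [IsRoot, eval_sub, eval_pow, eval_X]
        rw [← hz, ← map_pow, ZMod.pow_card, sub_self]
    have hcard := Finset.card_le_card hsub
    rw [Finset.card_insert_of_notMem hyT, hTcard] at hcard
    have h2 : f.roots.toFinset.card ≤ Multiset.card f.roots := Multiset.toFinset_card_le _
    have h3 : Multiset.card f.roots ≤ f.natDegree := f.card_roots'
    omega
  have h4 : Nat.card {x : k // x ^ p = x} = Nat.card (ZMod p) :=
    (Nat.card_congr (Equiv.ofBijective e ⟨heinj, hesurj⟩)).symm
  rw [h4, Nat.card_zmod]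

lemma stmt4_weight_ext {V : Type*} [AddCommGroup V] [Module k V] (φ : V →ₛₗ[frobenius k p] V)
    {ι : Type*} [Fintype ι] (B : Basis ι k V) (hfix : ∀ i, φ (B i) = B i)
    (g : ι → k) (hg : ∀ i, g i ^ p = g i) (h : V) :
    (B.constr k g) (φ h) = ((B.constr k g) h) ^ p := by
  set lam := B.constr k g with hlam
  have hφh : φ h = ∑ i, (B.repr h i) ^ p • B i := by
    conv_lhs => rw [← B.sum_repr h]
    rw [map_sum]
    refine Finset.sum_congr rfl fun i _ => ?_
    rw [map_smulₛₗ, frobenius_def, hfix i]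
  have h1 : lam (φ h) = ∑ i, (B.repr h i) ^ p * g i := by
    rw [hφh, map_sum]
    refine Finset.sum_congr rfl fun i _ => ?_
    rw [map_smul, hlam, Basis.constr_basis, smul_eq_mul]
  have h2 : lam h = ∑ i, (B.repr h i) * g i := by
    conv_lhs => rw [← B.sum_repr h]
    rw [map_sum]
    refine Finset.sum_congr rfl fun i _ => ?_
    rw [map_smul, hlam, Basis.constr_basis, smul_eq_mul]
  rw [h1, h2]
  have h3 : (∑ i, (B.repr h i) * g i) ^ p = ∑ i, ((B.repr h i) * g i) ^ p := by
    calc (∑ i, (B.repr h i) * g i) ^ p = frobenius k p (∑ i, (B.repr h i) * g i) := rfl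
    _ = ∑ i, frobenius k p ((B.repr h i) * g i) := map_sum _ _ _
    _ = ∑ i, ((B.repr h i) * g i) ^ p := rfl
  rw [h3]
  refine Finset.sum_congr rfl fun i _ => ?_
  rw [mul_pow, hg i]

end Count

theorem stmt4' {k : Type*} [Field k] [IsAlgClosed k] {p : ℕ} [Fact p.Prime] [CharP k p]
    {H : Type*} [LieRing H] [LieAlgebra k H] [IsLieAbelian H] [Module.Finite k H]
    (pOp : H → H)
    (hadd : ∀ x y : H, pOp (x + y) = pOp x + pOp y)
    (hsmul : ∀ (c : k) (x : H), pOp (c • x) = c ^ p • pOp x)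
    (hinj : Function.Injective pOp) :
    Nat.card {lam : Module.Dual k H // ∀ h : H, lam (pOp h) = (lam h) ^ p}
      = p ^ Module.finrank k H := by
  classical
  let φ : H →ₛₗ[frobenius k p] H :=
    { toFun := pOp
      map_add' := hadd
      map_smul' := fun c x => by
        show pOp (c • x) = frobenius k p c • pOp x
        rw [frobenius_def]
        exact hsmul c x }
  have hφinj : Function.Injective φ := hinj
  have hspan := stmt4_span_fixed (k := k) (p := p) (Module.finrank k H) H φ hφinj rfl
  obtain ⟨bs, hbsS, hbspan, hbli⟩ := exists_linearIndependent k {x : H | φ x = x}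
  rw [hspan] at hbspan
  have htop : ⊤ ≤ Submodule.span k (Set.range ((↑) : bs → H)) := by
    rw [Subtype.range_coe, hbspan]
  let B : Basis bs k H := Basis.mk hbli htop
  haveI : Fintype bs := FiniteDimensional.fintypeBasisIndex B
  have hcard : Fintype.card bs = Module.finrank k H := (Module.finrank_eq_card_basis B).symm
  have hfixB : ∀ i : bs, φ (B i) = B i := fun i => by
    have h1 : (i : H) ∈ {x : H | φ x = x} := hbsS i.2
    rw [Basis.mk_apply]
    exact h1
  let E : {lam : Module.Dual k H // ∀ h : H, lam (pOp h) = (lam h) ^ p}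
      ≃ (bs → {x : k // x ^ p = x}) :=
    { toFun := fun lam i => ⟨lam.1 (B i), by
        have h1 := lam.2 (B i)
        rw [show pOp (B i) = B i from hfixB i] at h1
        exact h1.symm⟩
      invFun := fun t => ⟨B.constr k (fun i => (t i : k)),
        fun h => stmt4_weight_ext φ B hfixB (fun i => (t i : k)) (fun i => (t i).2) h⟩
      left_inv := fun lam => by
        apply Subtype.ext
        apply B.ext
        intro i
        rw [Basis.constr_basis]
      right_inv := fun t => by
        funext i
        apply Subtype.ext
        show (B.constr k fun j => ((t j : k))) (B i) = t i
        rw [Basis.constr_basis] }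
  rw [Nat.card_congr E, Nat.card_pi]
  simp only [stmt4_card_fixedfield]
  rw [Finset.prod_const, Finset.card_univ, hcard]

/-- let `H` be a finite-dimensional torus in a restricted Lie algebra
over an algebraically closed field `k` of characteristic `p`: `H` is an abelian
restricted Lie algebra (so only its vector space structure and `p`-operation
matter), the `p`-operation `pOp` is additive and `p`-semilinear, and `pOp` is
injective.  Then the set of restricted weights
`Λ = {λ ∈ H* : λ(pOp h) = λ(h)^p for all h}` has exactly `p^(dim H)` elements. -/
theorem stmt4 {k : Type*} [Field k] [IsAlgClosed k] {p : ℕ} [Fact p.Prime] [CharP k p]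
    {H : Type*} [LieRing H] [LieAlgebra k H] [IsLieAbelian H] [Module.Finite k H]
    (pOp : H → H)
    (hadd : ∀ x y : H, pOp (x + y) = pOp x + pOp y)
    (hsmul : ∀ (c : k) (x : H), pOp (c • x) = c ^ p • pOp x)
    (hinj : Function.Injective pOp) :
    Nat.card {lam : Module.Dual k H // ∀ h : H, lam (pOp h) = (lam h) ^ p}
      = p ^ Module.finrank k H := by
  exact stmt4' pOp hadd hsmul hinj
end
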